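/- For every integer s ≥ 2 and all u, v ∈ Z_{2^s}, the Hamming distance between the Gray images satisfies d_H(φ(u), φ(v)) = wt_H(φ(u − v)). -/

import Mathlib

/-- The `i`-th digit of the binary expansion of `u : ZMod (2^s)`. -/
def gdigit (s : ℕ) (u : ZMod (2^s)) (i : ℕ) : ZMod 2 :=
  if (ZMod.val u).testBit i then 1 else 0

/-- Carlet's generalized Gray map `φ : ZMod (2^s) → (Z_2^{s-1} → Z_2)`:
the coordinate indexed by `y ∈ Z_2^{s-1}` is `u_{s-1} + ∑ u_i y_i`. -/
def gray (s : ℕ) (u : ZMod (2^s)) : (Fin (s - 1) → ZMod 2) → ZMod 2 :=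
  fun y => gdigit s u (s - 1) + ∑ i : Fin (s - 1), gdigit s u (i : ℕ) * y i

lemma affine_norm {n : ℕ} (c : ZMod 2) (a : Fin n → ZMod 2) :
    hammingNorm (fun y : Fin n → ZMod 2 => c + ∑ i, a i * y i)
      = if a = 0 then (if c = 0 then 0 else 2 ^ n) else 2 ^ (n - 1) := by
  classical
  have hcardu : Fintype.card (Fin n → ZMod 2) = 2 ^ n := by
    simp [Fintype.card_fun]
  by_cases ha : a = 0
  · subst ha
    simp only [if_pos rfl, Pi.zero_apply, zero_mul, Finset.sum_const_zero, add_zero]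
    by_cases hc : c = 0
    · simp [hc, hammingNorm]
    · rw [if_neg hc]
      simp only [hammingNorm, ne_eq, hc, not_false_iff, Finset.filter_true,
        Finset.card_univ, hcardu]
      simp
  · rw [if_neg ha]
    obtain ⟨i0, hi0⟩ : ∃ i, a i ≠ 0 := by
      by_contra h; push_neg at h; exact ha (funext h)
    have hone : ∀ x : ZMod 2, x ≠ 0 → x = 1 := by decide
    have hai0 : a i0 = 1 := hone _ hi0
    set f : (Fin n → ZMod 2) → ZMod 2 := fun y => c + ∑ i, a i * y i with hf
    set e : (Fin n → ZMod 2) → (Fin n → ZMod 2) :=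
      fun y => Function.update y i0 (y i0 + 1) with he
    have hkey : ∀ y, f (e y) = f y + 1 := by
      intro y
      have hsum : ∑ i, a i * (e y) i
          = ∑ i, (a i * y i + if i = i0 then 1 else 0) := by
        refine Finset.sum_congr rfl (fun i _ => ?_)
        by_cases hii : i = i0
        · subst hii
          simp [he, Function.update_self, hai0, mul_add]
        · simp [he, Function.update_of_ne hii, hii]
      simp only [hf, hsum, Finset.sum_add_distrib, Finset.sum_ite_eq',
        Finset.mem_univ, if_true]
      ring
    have hee : ∀ y, e (e y) = y := by
      intro y
      funext j
      by_cases hj : j = i0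
      · subst hj
        have h2 : (1 : ZMod 2) + 1 = 0 := by decide
        simp [he, Function.update_self, add_assoc, h2]
      · simp [he, Function.update_of_ne hj]
    have hcard : (Finset.univ.filter fun y => ¬ f y = 0).card
        = (Finset.univ.filter fun y => f y = 0).card := by
      refine Finset.card_bij' (fun y _ => e y) (fun y _ => e y) ?_ ?_ ?_ ?_
      · intro y hy
        simp only [Finset.mem_filter, Finset.mem_univ, true_and] at hy ⊢
        rw [hkey, hone _ hy]; decide
      · intro y hy
        simp only [Finset.mem_filter, Finset.mem_univ, true_and] at hy ⊢
        rw [hkey, hy]; decide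
      · intro y _; exact hee y
      · intro y _; exact hee y
    have htot : (Finset.univ.filter fun y => f y = 0).card
        + (Finset.univ.filter fun y => ¬ (f y = 0)).card
        = Fintype.card (Fin n → ZMod 2) := by
      rw [Finset.card_filter_add_card_filter_not, Finset.card_univ]
    have hn : 1 ≤ n := i0.pos
    have hpow : 2 ^ n = 2 * 2 ^ (n - 1) := by
      conv_lhs => rw [show n = (n-1) + 1 by omega]
      ring
    have hnorm : hammingNorm f = (Finset.univ.filter fun y => ¬ f y = 0).card := by
      simp only [hammingNorm, ne_eq]
    rw [hnorm]
    omega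

lemma gdigit_sub_eq_zero_iff {s : ℕ} (u v : ZMod (2^s)) (i : ℕ) :
    gdigit s u i - gdigit s v i = 0
      ↔ (ZMod.val u).testBit i = (ZMod.val v).testBit i := by
  unfold gdigit
  cases h1 : (ZMod.val u).testBit i <;> cases h2 : (ZMod.val v).testBit i <;>
    simp <;> decide

lemma gdigit_eq_zero_iff {s : ℕ} (w : ZMod (2^s)) (i : ℕ) :
    gdigit s w i = 0 ↔ (ZMod.val w).testBit i = false := by
  unfold gdigit
  cases h : (ZMod.val w).testBit i <;> simp <;> decide

lemma mod_two_pow_eq_iff (x y k : ℕ) :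
    x % 2 ^ k = y % 2 ^ k ↔ ∀ i < k, x.testBit i = y.testBit i := by
  constructor
  · intro h i hi
    have := congrArg (fun z => Nat.testBit z i) h
    simpa [Nat.testBit_mod_two_pow, hi] using this
  · intro h
    apply Nat.eq_of_testBit_eq
    intro i
    by_cases hi : i < k
    · simp [Nat.testBit_mod_two_pow, hi, h i hi]
    · simp [Nat.testBit_mod_two_pow, hi]

theorem hammingDist_gray (s : ℕ) (hs : 2 ≤ s) (u v : ZMod (2^s)) :
    hammingDist (gray s u) (gray s v) = hammingNorm (gray s (u - v)) := by
  classical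
  haveI : NeZero (2 ^ s) := ⟨by positivity⟩
  rw [hammingDist_comm, hammingDist_eq_hammingNorm, neg_add_eq_sub]
  have hsub : gray s u - gray s v
      = fun y => (gdigit s u (s-1) - gdigit s v (s-1))
          + ∑ i : Fin (s-1), (gdigit s u (i:ℕ) - gdigit s v (i:ℕ)) * y i := by
    funext y
    simp only [Pi.sub_apply, gray, sub_mul, Finset.sum_sub_distrib]
    ring
  have hR : gray s (u - v)
      = fun y => gdigit s (u-v) (s-1)
          + ∑ i : Fin (s-1), gdigit s (u-v) (i:ℕ) * y i := rfl
  rw [hsub, hR, affine_norm, affine_norm]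
  set M := 2 ^ (s - 1) with hM
  have hMpos : 0 < M := by positivity
  have h2M : 2 ^ s = 2 * M := by
    rw [hM]; conv_lhs => rw [show s = (s-1) + 1 by omega]
    ring
  -- a1 = 0 ↔ val u ≡ val v mod M
  have ha1 : ((fun i : Fin (s-1) => gdigit s u (i:ℕ) - gdigit s v (i:ℕ)) = 0)
      ↔ (ZMod.val u) % M = (ZMod.val v) % M := by
    rw [funext_iff, mod_two_pow_eq_iff]
    constructor
    · intro h i hi
      have := h ⟨i, hi⟩
      rwa [Pi.zero_apply, gdigit_sub_eq_zero_iff] at this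
    · intro h i
      rw [Pi.zero_apply, gdigit_sub_eq_zero_iff]
      exact h i i.2
  -- a2 = 0 ↔ val (u - v) ≡ 0 mod M
  have ha2 : ((fun i : Fin (s-1) => gdigit s (u-v) (i:ℕ)) = 0)
      ↔ (ZMod.val (u - v)) % M = 0 := by
    rw [funext_iff]
    have h0 : (ZMod.val (u - v)) % M = 0 ↔ (ZMod.val (u-v)) % M = 0 % M := by
      simp
    rw [h0, mod_two_pow_eq_iff]
    constructor
    · intro h i hi
      have := h ⟨i, hi⟩
      rw [Pi.zero_apply, gdigit_eq_zero_iff] at this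
      simp [this]
    · intro h i
      rw [Pi.zero_apply, gdigit_eq_zero_iff]
      have := h i i.2
      simpa using this
  -- the two conditions are equivalent
  have hMdvd : M ∣ 2 ^ s := pow_dvd_pow 2 (by omega)
  have hcongr : (ZMod.val u) % M = (ZMod.val v) % M ↔ (ZMod.val (u - v)) % M = 0 := by
    have hcast : ∀ w : ZMod (2^s),
        ((ZMod.val w : ℕ) : ZMod M) = ZMod.castHom hMdvd (ZMod M) w := by
      intro w
      rw [ZMod.castHom_apply, ZMod.natCast_val]
    constructor
    · intro h
      have h' : ((ZMod.val u : ℕ) : ZMod M) = ((ZMod.val v : ℕ) : ZMod M) := by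
        rwa [ZMod.natCast_eq_natCast_iff']
      rw [hcast, hcast] at h'
      have hz : ZMod.castHom hMdvd (ZMod M) (u - v) = 0 := by
        rw [map_sub, h', sub_self]
      rw [← hcast] at hz
      rw [ZMod.natCast_eq_zero_iff] at hz
      exact Nat.mod_eq_zero_of_dvd hz
    · intro h
      have hdvd : M ∣ ZMod.val (u - v) := Nat.dvd_of_mod_eq_zero h
      have h0 : ((ZMod.val (u - v) : ℕ) : ZMod M) = 0 := by
        rwa [ZMod.natCast_eq_zero_iff]
      rw [hcast, map_sub, sub_eq_zero] at h0
      rw [← hcast, ← hcast] at h0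
      rwa [ZMod.natCast_eq_natCast_iff'] at h0
  by_cases hA : (ZMod.val u) % M = (ZMod.val v) % M
  · rw [if_pos (ha1.mpr hA), if_pos (ha2.mpr (hcongr.mp hA))]
    -- constants: c1 = 0 ↔ u = v ↔ c2 = 0
    have hwlow : (ZMod.val (u - v)) % M = 0 := hcongr.mp hA
    have hvu : ZMod.val u < 2 * M := by rw [← h2M]; exact ZMod.val_lt u
    have hvv : ZMod.val v < 2 * M := by rw [← h2M]; exact ZMod.val_lt v
    have hvw : ZMod.val (u - v) < 2 * M := by rw [← h2M]; exact ZMod.val_lt (u - v)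
    have eu := Nat.mod_add_div (ZMod.val u) M
    have ev := Nat.mod_add_div (ZMod.val v) M
    have ew := Nat.mod_add_div (ZMod.val (u - v)) M
    have hdu : ZMod.val u / M = 0 ∨ ZMod.val u / M = 1 :=
      Nat.le_one_iff_eq_zero_or_eq_one.mp (Nat.lt_succ_iff.mp ((Nat.div_lt_iff_lt_mul hMpos).2 hvu))
    have hdv : ZMod.val v / M = 0 ∨ ZMod.val v / M = 1 :=
      Nat.le_one_iff_eq_zero_or_eq_one.mp (Nat.lt_succ_iff.mp ((Nat.div_lt_iff_lt_mul hMpos).2 hvv))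
    have hdw : ZMod.val (u - v) / M = 0 ∨ ZMod.val (u - v) / M = 1 :=
      Nat.le_one_iff_eq_zero_or_eq_one.mp (Nat.lt_succ_iff.mp ((Nat.div_lt_iff_lt_mul hMpos).2 hvw))
    generalize hgu : ZMod.val u % M = ru at eu hA
    generalize hgv : ZMod.val v % M = rv at ev hA
    generalize hgw : ZMod.val (u - v) % M = rw' at ew hwlow
    have hc1 : (gdigit s u (s-1) - gdigit s v (s-1) = 0) ↔ u = v := by
      rw [gdigit_sub_eq_zero_iff, Nat.testBit_eq_decide_div_mod_eq, Nat.testBit_eq_decide_div_mod_eq,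
        ← hM, decide_eq_decide]
      constructor
      · intro h
        have hval : ZMod.val u = ZMod.val v := by
          rcases hdu with h1 | h1 <;> rcases hdv with h2 | h2 <;>
            rw [h1] at eu h <;> rw [h2] at ev h <;> omega
        exact ZMod.val_injective _ hval
      · intro h; rw [h]
    have hc2 : (gdigit s (u - v) (s-1) = 0) ↔ u = v := by
      rw [gdigit_eq_zero_iff, Nat.testBit_eq_decide_div_mod_eq, ← hM,
        decide_eq_false_iff_not]
      rw [show (u = v) ↔ (u - v = 0) from (sub_eq_zero).symm]
      constructor
      · intro h
        have hval : ZMod.val (u - v) = 0 := by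
          rcases hdw with h1 | h1 <;> rw [h1] at ew h <;> omega
        have : ZMod.val (u - v) = ZMod.val (0 : ZMod (2^s)) := by
          rw [hval, ZMod.val_zero]
        exact ZMod.val_injective _ this
      · intro h
        rw [h, ZMod.val_zero]
        simp
    rw [if_congr (hc1.trans hc2.symm) rfl rfl]
  · rw [if_neg (fun h => hA (ha1.mp h)),
      if_neg (fun h => hA (hcongr.mpr (ha2.mp h)))]
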